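/- Let g ∈ L²(ℝ) be an arbitrary window function, let θ ∈ ℝ, h > 0, z ∈ ℝ², and let P = z + R_θ(ℝ × hℤ) = {z + R_θ·(x, hk)ᵀ : x ∈ ℝ, k ∈ ℤ} be a set of shifted parallel lines in the time-frequency plane. Then there exist f₁, f₂ ∈ L²(ℝ) such that |V_g f₁(p)| = |V_g f₂(p)| for every p ∈ P, yet f₁ and f₂ do not agree up to a global phase. In other words, (g, P) is never a uniqueness pair of the STFT phase retrieval problem. -/

import Mathlib

open MeasureTheory Complex Real
open scoped ENNReal NNReal

/-- The short-time Fourier transform of `f ∈ L²(ℝ)` with respect to the window `g ∈ L²(ℝ)`: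
`V_g f (x, ω) = ∫ f(t) conj(g(t-x)) e^{-2πiωt} dt`. -/
noncomputable def STFT (g f : Lp ℂ 2 (volume : Measure ℝ)) (x ω : ℝ) : ℂ :=
  ∫ t : ℝ, f t * (starRingEnd ℂ) (g (t - x)) * Complex.exp (-2 * Real.pi * Complex.I * ω * t)

/-- `f` and `h` agree up to a global phase: `f = ν • h` for some unimodular `ν ∈ ℂ`. -/
def SamePhase (f h : Lp ℂ 2 (volume : Measure ℝ)) : Prop :=
  ∃ ν : ℂ, ‖ν‖ = 1 ∧ f = ν • h

section Aux

open Set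
open scoped ENNReal NNReal

/-! ### Generic auxiliary lemmas -/

lemma aux_int_mul {f q : ℝ → ℂ} (hf : MemLp f 2 (volume : Measure ℝ))
    (hq : MemLp q 2 (volume : Measure ℝ)) :
    Integrable (fun t => f t * q t) volume := by
  have hfc : MemLp (fun t => (starRingEnd ℂ) (f t)) 2 (volume : Measure ℝ) := by
    refine ⟨Complex.continuous_conj.comp_aestronglyMeasurable hf.1, ?_⟩
    have : eLpNorm (fun t => (starRingEnd ℂ) (f t)) 2 volume = eLpNorm f 2 volume :=
      eLpNorm_congr_norm_ae (Filter.Eventually.of_forall fun t => by simp)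
    rw [this]; exact hf.2
  have h := L2.integrable_inner (𝕜 := ℂ) (hfc.toLp _) (hq.toLp _)
  refine h.congr ?_
  filter_upwards [hfc.coeFn_toLp, hq.coeFn_toLp] with t h1 h2
  rw [h1, h2]
  simp [RCLike.inner_apply, mul_comm]

lemma aux_memLp_unimod {f : ℝ → ℂ} (hf : MemLp f 2 (volume : Measure ℝ))
    {c : ℝ → ℂ} (hc : Continuous c) (hc1 : ∀ t, ‖c t‖ = 1) :
    MemLp (fun t => c t * f t) 2 (volume : Measure ℝ) := by
  refine ⟨(hc.aestronglyMeasurable).mul hf.1, ?_⟩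
  have : eLpNorm (fun t => c t * f t) 2 volume = eLpNorm f 2 volume :=
    eLpNorm_congr_norm_ae (Filter.Eventually.of_forall fun t => by
      rw [norm_mul, hc1 t, one_mul])
  rw [this]; exact hf.2

lemma aux_memLp_conj_shift (g : Lp ℂ 2 (volume : Measure ℝ)) (X : ℝ) :
    MemLp (fun t : ℝ => (starRingEnd ℂ) (g (t - X))) 2 (volume : Measure ℝ) := by
  have h0 : MemLp (fun t : ℝ => g (t - X)) 2 (volume : Measure ℝ) :=
    (Lp.memLp g).comp_measurePreserving (measurePreserving_sub_right volume X)
  refine ⟨Complex.continuous_conj.comp_aestronglyMeasurable h0.1, ?_⟩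
  have : eLpNorm (fun t : ℝ => (starRingEnd ℂ) (g (t - X))) 2 volume
      = eLpNorm (fun t : ℝ => g (t - X)) 2 volume :=
    eLpNorm_congr_norm_ae (Filter.Eventually.of_forall fun t => by simp)
  rw [this]; exact h0.2

lemma aux_integrand_integrable (g : Lp ℂ 2 (volume : Measure ℝ)) {w : ℝ → ℂ}
    (hw : MemLp w 2 (volume : Measure ℝ)) (X Ω : ℝ) :
    Integrable (fun t : ℝ => w t * (starRingEnd ℂ) (g (t - X))
      * Complex.exp (-2 * Real.pi * Complex.I * Ω * t)) volume := by
  have h1 : MemLp (fun t : ℝ => Complex.exp (-2 * Real.pi * Complex.I * Ω * t) * w t) 2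
      (volume : Measure ℝ) := by
    refine aux_memLp_unimod hw ?_ ?_
    · fun_prop
    · intro t
      rw [Complex.norm_exp]
      norm_num [Complex.mul_re]
  have := aux_int_mul h1 (aux_memLp_conj_shift g X)
  refine this.congr (Filter.Eventually.of_forall fun t => ?_)
  ring

lemma ae_translate {α : Type*} [MeasurableSpace α] {f f' : ℝ → α}
    (hyp : f =ᵐ[(volume : Measure ℝ)] f') (c : ℝ) :
    (fun t => f (t + c)) =ᵐ[(volume : Measure ℝ)] fun t => f' (t + c) :=
  (measurePreserving_add_right (volume : Measure ℝ) c).quasiMeasurePreserving.ae_eq_comp hyp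

lemma measurePreserving_refl_aux (a : ℝ) :
    MeasurePreserving (fun t : ℝ => a - t) volume volume := by
  have := (measurePreserving_add_right (volume : Measure ℝ) a).comp
    (Measure.measurePreserving_neg (volume : Measure ℝ))
  simpa [Function.comp_def, sub_eq_neg_add] using this

/-- If an `L²` function has `|G|² = c·|G(·+a)|²` a.e. with `a ≠ 0`, then `G = 0` a.e. -/
lemma periodic_L2_zero {G : ℝ → ℂ} (hG : MemLp G 2 (volume : Measure ℝ)) {a : ℝ} (ha : a ≠ 0)
    {c : ℝ≥0∞} (hc_top : c ≠ ⊤)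
    (hnorm : (fun t => (‖G t‖₊ : ℝ≥0∞) ^ (2 : ℝ))
      =ᵐ[(volume : Measure ℝ)] fun t => c * (‖G (t + a)‖₊ : ℝ≥0∞) ^ (2 : ℝ)) :
    G =ᵐ[(volume : Measure ℝ)] 0 := by
  set ψ : ℝ → ℝ≥0∞ := fun t => (‖G t‖₊ : ℝ≥0∞) ^ (2 : ℝ) with hψdef
  have hψm : AEMeasurable ψ (volume : Measure ℝ) := hG.1.enorm.pow_const (2 : ℝ)
  have hconc : (∀ᵐ t ∂(volume : Measure ℝ), ψ t = 0) → G =ᵐ[(volume : Measure ℝ)] 0 := by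
    intro hyp
    filter_upwards [hyp] with t ht
    simp only [hψdef, ENNReal.rpow_eq_zero_iff] at ht
    rcases ht with ⟨h0, _⟩ | ⟨_, h2⟩
    · simpa using h0
    · norm_num at h2
  set T : ℝ≥0∞ := ∫⁻ t, ψ t ∂(volume : Measure ℝ) with hTdef
  have hT_top : T ≠ ⊤ := by
    have h2 := hG.2
    rw [eLpNorm_eq_lintegral_rpow_enorm_toReal (by norm_num) (by norm_num)] at h2
    have he : ENNReal.toReal 2 = (2 : ℝ) := by norm_num
    rw [he] at h2
    exact ((ENNReal.rpow_lt_top_iff_of_pos (by norm_num : (0:ℝ) < 1/2)).mp h2).ne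
  by_cases hT0 : T = 0
  · exact hconc ((lintegral_eq_zero_iff' hψm).mp hT0)
  have htrans : ∫⁻ t, ψ (t + a) ∂(volume : Measure ℝ) = T := lintegral_add_right_eq_self ψ a
  have hTc : c * T = 1 * T := by
    rw [one_mul]
    calc c * T = c * ∫⁻ t, ψ (t + a) ∂(volume : Measure ℝ) := by rw [htrans]
    _ = ∫⁻ t, c * ψ (t + a) ∂(volume : Measure ℝ) := (lintegral_const_mul' _ _ hc_top).symm
    _ = ∫⁻ t, ψ t ∂(volume : Measure ℝ) := (lintegral_congr_ae hnorm).symm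
    _ = T := rfl
  have hc1 : c = 1 := (ENNReal.mul_left_inj hT0 hT_top).mp hTc
  have hper : ψ =ᵐ[(volume : Measure ℝ)] fun t => ψ (t + a) := by
    have h' := hnorm
    rw [hc1] at h'
    simp only [one_mul] at h'
    exact h'
  have hper_z : ∀ n : ℤ, ψ =ᵐ[(volume : Measure ℝ)] fun t => ψ (t + (n : ℝ) * a) := by
    intro n
    induction n using Int.induction_on with
    | zero => simp
    | succ n ih =>
        push_cast at ih ⊢
        have step := ae_translate hper ((n : ℝ) * a)
        refine (ih.trans step).trans (Filter.EventuallyEq.of_eq ?_)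
        funext t; congr 1; ring
    | pred n ih =>
        push_cast at ih ⊢
        have hper' : (fun t : ℝ => ψ (t + -a)) =ᵐ[(volume : Measure ℝ)] ψ := by
          have h2 := ae_translate hper (-a)
          have harg : (fun t : ℝ => ψ (t + -a + a)) = ψ := by
            funext t; have ht : t + -a + a = t := by ring
            rw [ht]
          rwa [harg] at h2
        have step := ae_translate hper'.symm (-(n : ℝ) * a)
        refine (ih.trans step).trans (Filter.EventuallyEq.of_eq ?_)
        funext t; congr 1; ring
  set A : ℝ := |a| with hAdef
  have hA : 0 < A := abs_pos.mpr ha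
  have hper_A : ∀ n : ℤ, ψ =ᵐ[(volume : Measure ℝ)] fun t => ψ (t + (n : ℝ) * A) := by
    intro n
    rcases abs_choice a with h | h
    · rw [hAdef, h]; exact hper_z n
    · rw [hAdef, h]
      have := hper_z (-n)
      refine this.trans (Filter.EventuallyEq.of_eq ?_)
      funext t; congr 1; push_cast; ring
  have hshift : ∀ c' : ℝ, (∫⁻ t in Ico c' (c' + A), ψ t ∂(volume : Measure ℝ))
      = ∫⁻ t in Ico 0 A, ψ (t + c') ∂(volume : Measure ℝ) := by
    intro c'
    rw [← lintegral_indicator measurableSet_Ico, ← lintegral_indicator measurableSet_Ico,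
      ← lintegral_add_right_eq_self (fun t => (Ico c' (c' + A)).indicator ψ t) c']
    refine lintegral_congr fun t => ?_
    by_cases ht : t ∈ Ico 0 A
    · rw [indicator_of_mem ht, indicator_of_mem]
      rw [mem_Ico] at ht ⊢
      constructor <;> linarith [ht.1, ht.2]
    · rw [indicator_of_notMem ht, indicator_of_notMem]
      rw [mem_Ico] at ht ⊢
      intro hcon
      exact ht ⟨by linarith [hcon.1], by linarith [hcon.2]⟩
  have hpiece : ∀ n : ℤ, (∫⁻ t in Ico ((n : ℝ) * A) ((n : ℝ) * A + A), ψ t ∂(volume : Measure ℝ))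
      = ∫⁻ t in Ico 0 A, ψ t ∂(volume : Measure ℝ) := by
    intro n
    rw [hshift ((n : ℝ) * A)]
    refine lintegral_congr_ae (ae_restrict_of_ae ?_)
    exact (hper_A n).symm
  set D : ℝ≥0∞ := ∫⁻ t in Ico 0 A, ψ t ∂(volume : Measure ℝ) with hDdef
  have hSN : ∀ N : ℕ, (∫⁻ t in Ico 0 ((N : ℝ) * A), ψ t ∂(volume : Measure ℝ))
      = (N : ℝ≥0∞) * D := by
    intro N
    induction N with
    | zero => simp
    | succ N ih =>
        have hsplit : Ico (0 : ℝ) (((N : ℕ) + 1 : ℝ) * A)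
            = Ico (0 : ℝ) ((N : ℝ) * A) ∪ Ico ((N : ℝ) * A) (((N : ℕ) + 1 : ℝ) * A) := by
          rw [Set.Ico_union_Ico_eq_Ico]
          · positivity
          · nlinarith
        push_cast
        rw [hsplit, lintegral_union measurableSet_Ico (Set.Ico_disjoint_Ico_same), ih]
        have : ((N : ℝ) + 1) * A = (N : ℝ) * A + A := by ring
        rw [this]
        have hp := hpiece (N : ℤ)
        push_cast at hp
        rw [hp]
        ring
  have hND : ∀ N : ℕ, (N : ℝ≥0∞) * D ≤ T := by
    intro N
    rw [← hSN N]
    exact setLIntegral_le_lintegral _ _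
  have hD0 : D = 0 := by
    by_contra hD0
    have hDT : D ≠ ⊤ := by
      intro hcon
      have := hND 1
      rw [hcon] at this
      simp at this
      exact hT_top this
    have hdiv : T / D ≠ ⊤ := (ENNReal.div_lt_top hT_top hD0).ne
    obtain ⟨N, hN⟩ := ENNReal.exists_nat_gt hdiv
    have hTN : T < (N : ℝ≥0∞) * D := by
      have h2 : T / D * D < (N : ℝ≥0∞) * D := by rw [mul_comm _ D, mul_comm _ D]; exact ENNReal.mul_lt_mul_right hD0 hDT hN
      rwa [ENNReal.div_mul_cancel hD0 hDT] at h2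
    exact absurd (hND N) (not_le.mpr hTN)
  have hpiece0 : ∀ n : ℤ,
      (volume : Measure ℝ) ({t : ℝ | ψ t ≠ 0} ∩ Ico ((n : ℝ) * A) ((n : ℝ) * A + A)) = 0 := by
    intro n
    have h0 : (∫⁻ t in Ico ((n : ℝ) * A) ((n : ℝ) * A + A), ψ t ∂(volume : Measure ℝ)) = 0 := by
      rw [hpiece n, hD0]
    have hae := (lintegral_eq_zero_iff' hψm.restrict).mp h0
    have := hae
    rw [Filter.EventuallyEq, ae_iff] at this
    rw [← Measure.restrict_apply' measurableSet_Ico]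
    convert this using 2
    rfl
  have hcov : {t : ℝ | ψ t ≠ 0}
      ⊆ ⋃ n : ℤ, ({t : ℝ | ψ t ≠ 0} ∩ Ico ((n : ℝ) * A) ((n : ℝ) * A + A)) := by
    intro t ht
    refine Set.mem_iUnion.mpr ⟨⌊t / A⌋, ht, ?_⟩
    rw [mem_Ico]
    constructor
    · rw [← le_div_iff₀ hA]
      exact Int.floor_le _
    · have h2 : t / A < (⌊t / A⌋ : ℝ) + 1 := Int.lt_floor_add_one _
      have := (div_lt_iff₀ hA).mp h2
      nlinarith
  have hzero : (volume : Measure ℝ) {t : ℝ | ψ t ≠ 0} = 0 :=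
    measure_mono_null hcov (measure_iUnion_null hpiece0)
  have : ψ =ᵐ[(volume : Measure ℝ)] 0 := by
    rw [Filter.EventuallyEq, ae_iff]
    convert hzero using 2
    rfl
  exact absurd ((lintegral_eq_zero_iff' hψm).mpr this) hT0

/-- If `G = d·e^{iβt}·G` a.e. with `β ≠ 0` and `G` not a.e. zero, contradiction. -/
lemma discrete_phase_zero {G : ℝ → ℂ} {d : ℂ} {β : ℝ} (hβ : β ≠ 0)
    (hae : ∀ᵐ t ∂(volume : Measure ℝ), G t = d * Complex.exp ((β * t : ℝ) * Complex.I) * G t)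
    (hGne : ¬ G =ᵐ[(volume : Measure ℝ)] 0) : False := by
  set S : Set ℝ := {t : ℝ | d * Complex.exp ((β * t : ℝ) * Complex.I) = 1} with hSdef
  have hmem : ∀ᵐ t ∂(volume : Measure ℝ), G t = 0 ∨ t ∈ S := by
    filter_upwards [hae] with t ht
    by_cases h0 : G t = 0
    · exact Or.inl h0
    · right
      have : (d * Complex.exp ((β * t : ℝ) * Complex.I) - 1) * G t = 0 := by
        rw [sub_mul, one_mul, ← ht]; ring
      rcases mul_eq_zero.mp this with h | h
      · exact sub_eq_zero.mp h
      · exact absurd h h0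
  have hSnull : (volume : Measure ℝ) S = 0 := by
    by_cases hne : S.Nonempty
    · obtain ⟨t₁, ht₁⟩ := hne
      have hsub : S ⊆ Set.range (fun n : ℤ => t₁ + (n : ℝ) * (2 * Real.pi / β)) := by
        intro t ht
        have h1 : Complex.exp ((β * t : ℝ) * Complex.I)
            = Complex.exp ((β * t₁ : ℝ) * Complex.I) := by
          have hd : d ≠ 0 := by
            intro h0
            rw [hSdef] at ht₁
            simp only [Set.mem_setOf_eq, h0, zero_mul] at ht₁
            exact zero_ne_one ht₁
          have e1 : d * Complex.exp ((β * t : ℝ) * Complex.I)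
              = d * Complex.exp ((β * t₁ : ℝ) * Complex.I) := by
            rw [ht, ht₁]
          exact mul_left_cancel₀ hd e1
        obtain ⟨n, hn⟩ := Complex.exp_eq_exp_iff_exists_int.mp h1
        refine ⟨n, ?_⟩
        have hre : (β * t : ℝ) = (β * t₁ : ℝ) + (n : ℝ) * (2 * Real.pi) := by
          have h2 : ((β * t : ℝ) : ℂ) = ((β * t₁ + (n : ℝ) * (2 * Real.pi) : ℝ) : ℂ) := by
            have hI : ((β * t : ℝ) : ℂ) * Complex.I
                = ((β * t₁ + (n : ℝ) * (2 * Real.pi) : ℝ) : ℂ) * Complex.I := by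
              rw [hn]; push_cast; ring
            exact mul_right_cancel₀ Complex.I_ne_zero hI
          exact_mod_cast h2
        show t₁ + (n : ℝ) * (2 * Real.pi / β) = t
        field_simp
        linarith [hre]
      exact measure_mono_null hsub ((Set.countable_range _).measure_zero _)
    · have : S = ∅ := Set.not_nonempty_iff_eq_empty.mp hne
      rw [this]; exact measure_empty
  refine hGne ?_
  have hS' : ∀ᵐ t ∂(volume : Measure ℝ), t ∉ S := by
    rw [ae_iff]
    simpa using hSnull
  filter_upwards [hmem, hS'] with t h1 h2
  rcases h1 with h | h
  · exact h
  · exact absurd h h2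

end Aux

section Main

/-! ### The two basic integrals -/

noncomputable def Acal (g : Lp ℂ 2 (volume : Measure ℝ)) (x ω : ℝ) : ℂ :=
  ∫ t : ℝ, g (-t) * (starRingEnd ℂ) (g (t - x)) * Complex.exp (-2 * Real.pi * Complex.I * ω * t)

noncomputable def Bcal (g : Lp ℂ 2 (volume : Measure ℝ)) (μ : ℂ) (a b : ℝ) (x ω : ℝ) : ℂ :=
  ∫ t : ℝ, (μ * Complex.exp (2 * Real.pi * Complex.I * b * t) * g (a - t))
    * (starRingEnd ℂ) (g (t - x)) * Complex.exp (-2 * Real.pi * Complex.I * ω * t)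

lemma Acal_conj (g : Lp ℂ 2 (volume : Measure ℝ)) (x ω : ℝ) :
    (starRingEnd ℂ) (Acal g x ω)
      = Complex.exp (2 * Real.pi * Complex.I * ω * x) * Acal g x ω := by
  have h1 : (starRingEnd ℂ) (Acal g x ω)
      = ∫ t : ℝ, (starRingEnd ℂ) (g (-t)) * g (t - x)
          * Complex.exp (2 * Real.pi * Complex.I * ω * t) := by
    rw [Acal, ← integral_conj]
    congr 1; funext t
    rw [map_mul, map_mul, ← Complex.exp_conj, Complex.conj_conj]
    congr 1
    congr 1
    simp only [map_mul, map_neg, Complex.conj_ofReal, Complex.conj_I, map_ofNat]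
    ring
  rw [h1, ← integral_sub_left_eq_self
      (fun t : ℝ => (starRingEnd ℂ) (g (-t)) * g (t - x)
        * Complex.exp (2 * Real.pi * Complex.I * ω * t)) volume x,
    Acal, ← integral_const_mul]
  congr 1; funext t
  have e1 : (-(x - t) : ℝ) = t - x := by ring
  have e2 : ((x - t) - x : ℝ) = -t := by ring
  rw [e1, e2]
  have e3 : Complex.exp (2 * Real.pi * Complex.I * ω * ((x : ℝ) - t : ℝ))
      = Complex.exp (2 * Real.pi * Complex.I * ω * x)
        * Complex.exp (-2 * Real.pi * Complex.I * ω * t) := by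
    rw [← Complex.exp_add]
    congr 1
    push_cast
    ring
  rw [e3]
  ring

lemma Bcal_eq (g : Lp ℂ 2 (volume : Measure ℝ)) (μ : ℂ) (a b x ω : ℝ) :
    Bcal g μ a b x ω
      = μ * Complex.exp (-2 * Real.pi * Complex.I * (ω - b) * a) * Acal g (x - a) (ω - b) := by
  rw [Bcal, ← integral_add_right_eq_self
    (fun t : ℝ => (μ * Complex.exp (2 * Real.pi * Complex.I * b * t) * g (a - t))
      * (starRingEnd ℂ) (g (t - x)) * Complex.exp (-2 * Real.pi * Complex.I * ω * t)) a,
    Acal, ← integral_const_mul]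
  congr 1; funext t
  have r1 : (a - (t + a) : ℝ) = -t := by ring
  have r2 : ((t + a) - x : ℝ) = t - (x - a) := by ring
  simp only [r1, r2]
  have e : Complex.exp (2 * Real.pi * Complex.I * b * ((t + a : ℝ) : ℂ))
        * Complex.exp (-2 * Real.pi * Complex.I * ω * ((t + a : ℝ) : ℂ))
      = Complex.exp (-2 * Real.pi * Complex.I * ((ω : ℂ) - (b : ℂ)) * (a : ℂ))
        * Complex.exp (-2 * Real.pi * Complex.I * ((ω : ℂ) - (b : ℂ)) * (t : ℂ)) := by
    rw [← Complex.exp_add, ← Complex.exp_add]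
    congr 1
    push_cast
    ring
  have hωb : ((ω - b : ℝ) : ℂ) = (ω : ℂ) - (b : ℂ) := by push_cast; ring
  rw [hωb]
  linear_combination (μ * (g (-t) : ℂ) * (starRingEnd ℂ) (g (t - (x - a)) : ℂ)) * e

lemma expReal_mul (p q : ℝ) :
    Complex.exp (p * Complex.I) * Complex.exp (q * Complex.I)
      = Complex.exp (((p + q : ℝ)) * Complex.I) := by
  rw [← Complex.exp_add]; congr 1; push_cast; ring

lemma exp_eq_of_sub_int (p q : ℝ) (n : ℤ) (h : p = q + n * (2 * Real.pi)) :
    Complex.exp ((p : ℝ) * Complex.I) = Complex.exp ((q : ℝ) * Complex.I) := by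
  have : ((p : ℝ) : ℂ) * Complex.I = (q : ℝ) * Complex.I + (n : ℂ) * (2 * Real.pi * Complex.I) := by
    rw [h]; push_cast; ring
  rw [this, Complex.exp_add, Complex.exp_int_mul_two_pi_mul_I, mul_one]

lemma Bcal_conj (g : Lp ℂ 2 (volume : Measure ℝ)) (a b s X Ω : ℝ) (k : ℤ)
    (hkey : a * Ω - b * X - a * b = s + 2 * (k : ℝ)) :
    (starRingEnd ℂ) (Bcal g (Complex.I * Complex.exp ((Real.pi * s : ℝ) * Complex.I)) a b X Ω)
      = -(Complex.exp (2 * Real.pi * Complex.I * Ω * X))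
          * Bcal g (Complex.I * Complex.exp ((Real.pi * s : ℝ) * Complex.I)) a b X Ω := by
  rw [Bcal_eq, map_mul, map_mul, Acal_conj]
  have c1 : (starRingEnd ℂ) (Complex.I * Complex.exp ((Real.pi * s : ℝ) * Complex.I))
      = -Complex.I * Complex.exp (((-(Real.pi * s) : ℝ)) * Complex.I) := by
    rw [map_mul, ← Complex.exp_conj]
    simp [Complex.conj_ofReal]
  have c2 : (starRingEnd ℂ) (Complex.exp (-2 * Real.pi * Complex.I * ((Ω : ℂ) - (b : ℂ)) * (a : ℝ)))
      = Complex.exp (((2 * Real.pi * (Ω - b) * a : ℝ)) * Complex.I) := by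
    rw [← Complex.exp_conj]
    congr 1
    simp only [map_mul, map_sub, map_neg, map_ofNat, Complex.conj_ofReal, Complex.conj_I]
    push_cast; ring
  have c3 : Complex.exp (2 * Real.pi * Complex.I * ((Ω - b : ℝ)) * ((X - a : ℝ)))
      = Complex.exp (((2 * Real.pi * (Ω - b) * (X - a) : ℝ)) * Complex.I) := by
    congr 1; push_cast; ring
  have c4 : Complex.exp (-2 * Real.pi * Complex.I * ((Ω : ℂ) - (b : ℂ)) * (a : ℝ))
      = Complex.exp (((-(2 * Real.pi * (Ω - b) * a) : ℝ)) * Complex.I) := by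
    congr 1; push_cast; ring
  have c5 : Complex.exp (2 * Real.pi * Complex.I * (Ω : ℝ) * (X : ℝ))
      = Complex.exp (((2 * Real.pi * Ω * X : ℝ)) * Complex.I) := by
    congr 1; push_cast; ring
  rw [c1, c2, c3, c4, c5]
  have key : Complex.exp (((-(Real.pi * s) : ℝ)) * Complex.I)
        * Complex.exp (((2 * Real.pi * (Ω - b) * a : ℝ)) * Complex.I)
        * Complex.exp (((2 * Real.pi * (Ω - b) * (X - a) : ℝ)) * Complex.I)
      = Complex.exp (((2 * Real.pi * Ω * X : ℝ)) * Complex.I)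
        * Complex.exp (((Real.pi * s : ℝ)) * Complex.I)
        * Complex.exp (((-(2 * Real.pi * (Ω - b) * a) : ℝ)) * Complex.I) := by
    rw [expReal_mul, expReal_mul, expReal_mul, expReal_mul]
    refine exp_eq_of_sub_int _ _ (2 * k) ?_
    push_cast
    linear_combination 2 * Real.pi * hkey
  linear_combination (-Complex.I) * (Acal g (X - a) (Ω - b)) * key

/-! ### STFT of the constructed functions -/

noncomputable def u0 (g : Lp ℂ 2 (volume : Measure ℝ)) : ℝ → ℂ := fun t => g (-t)

noncomputable def v0 (g : Lp ℂ 2 (volume : Measure ℝ)) (μ : ℂ) (a b : ℝ) : ℝ → ℂ :=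
  fun t => μ * Complex.exp (2 * Real.pi * Complex.I * b * t) * g (a - t)

lemma memLp_u0 (g : Lp ℂ 2 (volume : Measure ℝ)) : MemLp (u0 g) 2 (volume : Measure ℝ) :=
  (Lp.memLp g).comp_measurePreserving (Measure.measurePreserving_neg volume)

lemma memLp_v0 (g : Lp ℂ 2 (volume : Measure ℝ)) (μ : ℂ) (hμ : ‖μ‖ = 1) (a b : ℝ) :
    MemLp (v0 g μ a b) 2 (volume : Measure ℝ) := by
  have h0 : MemLp (fun t : ℝ => g (a - t)) 2 (volume : Measure ℝ) :=
    (Lp.memLp g).comp_measurePreserving (measurePreserving_refl_aux a)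
  refine aux_memLp_unimod h0 ?_ ?_
  · fun_prop
  · intro t
    rw [norm_mul, hμ, one_mul, Complex.norm_exp]
    norm_num [Complex.mul_re]

lemma STFT_toLp_eq (g : Lp ℂ 2 (volume : Measure ℝ)) {w : ℝ → ℂ}
    (hw : MemLp w 2 (volume : Measure ℝ)) (X Ω : ℝ) :
    STFT g (hw.toLp w) X Ω = ∫ t : ℝ, w t * (starRingEnd ℂ) (g (t - X))
      * Complex.exp (-2 * Real.pi * Complex.I * Ω * t) := by
  refine integral_congr_ae ?_
  filter_upwards [hw.coeFn_toLp] with t ht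
  rw [ht]

lemma STFT_add_eq (g : Lp ℂ 2 (volume : Measure ℝ)) (μ : ℂ) (hμ : ‖μ‖ = 1) (a b X Ω : ℝ) :
    STFT g (((memLp_u0 g).add (memLp_v0 g μ hμ a b)).toLp (u0 g + v0 g μ a b)) X Ω
      = Acal g X Ω + Bcal g μ a b X Ω := by
  rw [STFT_toLp_eq]
  have h1 : (∫ t : ℝ, (u0 g + v0 g μ a b) t * (starRingEnd ℂ) (g (t - X))
      * Complex.exp (-2 * Real.pi * Complex.I * Ω * t))
      = ∫ t : ℝ, (u0 g t * (starRingEnd ℂ) (g (t - X))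
          * Complex.exp (-2 * Real.pi * Complex.I * Ω * t)
        + v0 g μ a b t * (starRingEnd ℂ) (g (t - X))
          * Complex.exp (-2 * Real.pi * Complex.I * Ω * t)) := by
    congr 1; funext t
    simp only [Pi.add_apply]
    ring
  rw [h1, integral_add (aux_integrand_integrable g (memLp_u0 g) X Ω)
    (aux_integrand_integrable g (memLp_v0 g μ hμ a b) X Ω)]
  rfl

lemma STFT_sub_eq (g : Lp ℂ 2 (volume : Measure ℝ)) (μ : ℂ) (hμ : ‖μ‖ = 1) (a b X Ω : ℝ) :
    STFT g (((memLp_u0 g).sub (memLp_v0 g μ hμ a b)).toLp (u0 g - v0 g μ a b)) X Ω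
      = Acal g X Ω - Bcal g μ a b X Ω := by
  rw [STFT_toLp_eq]
  have h1 : (∫ t : ℝ, (u0 g - v0 g μ a b) t * (starRingEnd ℂ) (g (t - X))
      * Complex.exp (-2 * Real.pi * Complex.I * Ω * t))
      = ∫ t : ℝ, (u0 g t * (starRingEnd ℂ) (g (t - X))
          * Complex.exp (-2 * Real.pi * Complex.I * Ω * t)
        - v0 g μ a b t * (starRingEnd ℂ) (g (t - X))
          * Complex.exp (-2 * Real.pi * Complex.I * Ω * t)) := by
    congr 1; funext t
    simp only [Pi.sub_apply]
    ring
  rw [h1, integral_sub (aux_integrand_integrable g (memLp_u0 g) X Ω)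
    (aux_integrand_integrable g (memLp_v0 g μ hμ a b) X Ω)]
  rfl

end Main

/-- **No window and no set of shifted parallel lines form a uniqueness pair.** -/
theorem stmt2 (g : Lp ℂ 2 (volume : Measure ℝ)) (θ : ℝ) (h : ℝ) (hh : 0 < h) (z : ℝ × ℝ) :
    ∃ f₁ f₂ : Lp ℂ 2 (volume : Measure ℝ),
      (∀ x : ℝ, ∀ k : ℤ,
        ‖STFT g f₁ (z.1 + (x * Real.cos θ - (h * k) * Real.sin θ))
            (z.2 + (x * Real.sin θ + (h * k) * Real.cos θ))‖ =
        ‖STFT g f₂ (z.1 + (x * Real.cos θ - (h * k) * Real.sin θ))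
            (z.2 + (x * Real.sin θ + (h * k) * Real.cos θ))‖) ∧
      ¬ SamePhase f₁ f₂ := by
  by_cases hg : g = 0
  · -- trivial case: the window vanishes, all STFTs are zero
    have hg0 : (⇑g : ℝ → ℂ) =ᵐ[(volume : Measure ℝ)] 0 := Lp.eq_zero_iff_ae_eq_zero.mp hg
    have hfin : (volume : Measure ℝ) (Set.Ioc (0:ℝ) 1) ≠ ⊤ := by
      rw [Real.volume_Ioc]; exact ENNReal.ofReal_ne_top
    set find : Lp ℂ 2 (volume : Measure ℝ) :=
      indicatorConstLp 2 measurableSet_Ioc hfin (1 : ℂ) with hfinddef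
    have hzero : ∀ (f : Lp ℂ 2 (volume : Measure ℝ)) (X Ω : ℝ), STFT g f X Ω = 0 := by
      intro f X Ω
      rw [STFT]
      have hshift := (measurePreserving_sub_right (volume : Measure ℝ)
        X).quasiMeasurePreserving.ae_eq_comp hg0
      have h2 : (fun t : ℝ => (g (t - X) : ℂ)) =ᵐ[(volume : Measure ℝ)] fun _ => (0:ℂ) := by
        simpa [Function.comp_def, Pi.zero_def] using hshift
      have h3 : (fun t : ℝ => f t * (starRingEnd ℂ) (g (t - X))
          * Complex.exp (-2 * Real.pi * Complex.I * Ω * t))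
          =ᵐ[(volume : Measure ℝ)] fun _ => (0:ℂ) := by
        filter_upwards [h2] with t ht
        rw [ht]
        simp
      rw [integral_congr_ae h3, integral_zero]
    refine ⟨find, 0, ?_, ?_⟩
    · intro x k
      rw [hzero, hzero]
    · rintro ⟨ν, hν, hsp⟩
      rw [smul_zero] at hsp
      have hn := norm_indicatorConstLp (μ := (volume : Measure ℝ)) (s := Set.Ioc (0:ℝ) 1)
        (hs := measurableSet_Ioc) (hμs := hfin) (c := (1:ℂ)) two_ne_zero ENNReal.ofNat_ne_top
      rw [← hfinddef, hsp, norm_zero] at hn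
      rw [Real.volume_real_Ioc] at hn
      norm_num at hn
  · -- main case
    have hGne : ¬ ((⇑g : ℝ → ℂ) =ᵐ[(volume : Measure ℝ)] 0) :=
      fun hcon => hg (Lp.eq_zero_iff_ae_eq_zero.mpr hcon)
    set a : ℝ := 2 * Real.cos θ / h with hadef
    set b : ℝ := 2 * Real.sin θ / h with hbdef
    set s : ℝ := a * z.2 - b * z.1 - a * b with hsdef
    set μc : ℂ := Complex.I * Complex.exp ((Real.pi * s : ℝ) * Complex.I) with hμcdef
    have hμ1 : ‖μc‖ = 1 := by
      have e1 : ‖Complex.I‖ = 1 := by simp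
      have e2 : ‖Complex.exp (((Real.pi * s : ℝ)) * Complex.I)‖ = 1 := by
        rw [Complex.norm_exp_ofReal_mul_I]
      rw [hμcdef, norm_mul, e1, e2, mul_one]
    have hμne : μc ≠ 0 := by
      intro h0
      rw [h0, norm_zero] at hμ1
      norm_num at hμ1
    have hab : a ≠ 0 ∨ b ≠ 0 := by
      by_contra hcon
      push_neg at hcon
      obtain ⟨ha0, hb0⟩ := hcon
      have hc : Real.cos θ = 0 := by
        rw [hadef] at ha0
        field_simp at ha0
        linarith
      have hs' : Real.sin θ = 0 := by
        rw [hbdef] at hb0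
        field_simp at hb0
        linarith
      have := Real.sin_sq_add_cos_sq θ
      rw [hc, hs'] at this
      norm_num at this
    refine ⟨((memLp_u0 g).add (memLp_v0 g μc hμ1 a b)).toLp (u0 g + v0 g μc a b),
      ((memLp_u0 g).sub (memLp_v0 g μc hμ1 a b)).toLp (u0 g - v0 g μc a b), ?_, ?_⟩
    · intro x k
      rw [STFT_add_eq g μc hμ1 a b, STFT_sub_eq g μc hμ1 a b]
      set X : ℝ := z.1 + (x * Real.cos θ - h * (k:ℝ) * Real.sin θ) with hXdef
      set Ω : ℝ := z.2 + (x * Real.sin θ + h * (k:ℝ) * Real.cos θ) with hΩdef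
      have hkey : a * Ω - b * X - a * b = s + 2 * (k : ℝ) := by
        rw [hXdef, hΩdef, hsdef, hadef, hbdef]
        have pyth := Real.sin_sq_add_cos_sq θ
        field_simp
        linear_combination (h^2 * (k:ℝ)) * pyth
      have hA := Acal_conj g X Ω
      have hB := Bcal_conj g a b s X Ω k hkey
      rw [← hμcdef] at hB
      have hconj : (starRingEnd ℂ) (Acal g X Ω + Bcal g μc a b X Ω)
          = Complex.exp (2 * Real.pi * Complex.I * Ω * X)
            * (Acal g X Ω - Bcal g μc a b X Ω) := by
        rw [map_add, hA, hB]
        ring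
      have habs1 : ‖Complex.exp (2 * Real.pi * Complex.I * (Ω:ℝ) * (X:ℝ))‖ = 1 := by
        have : (2 * Real.pi * Complex.I * (Ω:ℝ) * (X:ℝ) : ℂ)
            = ((2 * Real.pi * Ω * X : ℝ) : ℂ) * Complex.I := by push_cast; ring
        rw [this, Complex.norm_exp_ofReal_mul_I]
      calc ‖Acal g X Ω + Bcal g μc a b X Ω‖
          = ‖(starRingEnd ℂ) (Acal g X Ω + Bcal g μc a b X Ω)‖ :=
            (Complex.norm_conj _).symm
        _ = ‖Complex.exp (2 * Real.pi * Complex.I * Ω * X)‖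
            * ‖Acal g X Ω - Bcal g μc a b X Ω‖ := by rw [hconj, norm_mul]
        _ = ‖Acal g X Ω - Bcal g μc a b X Ω‖ := by rw [habs1, one_mul]
    · rintro ⟨ν, hν, hsp⟩
      have hae0 : ∀ᵐ t ∂(volume : Measure ℝ),
          u0 g t + v0 g μc a b t = ν * (u0 g t - v0 g μc a b t) := by
        have h1 := ((memLp_u0 g).add (memLp_v0 g μc hμ1 a b)).coeFn_toLp
        have h2 := ((memLp_u0 g).sub (memLp_v0 g μc hμ1 a b)).coeFn_toLp
        have h3 := Lp.coeFn_smul ν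
          (((memLp_u0 g).sub (memLp_v0 g μc hμ1 a b)).toLp (u0 g - v0 g μc a b))
        filter_upwards [h1, h2, h3] with t ht1 ht2 ht3
        have e1 : u0 g t + v0 g μc a b t
            = (((memLp_u0 g).add (memLp_v0 g μc hμ1 a b)).toLp (u0 g + v0 g μc a b)) t := by
          rw [ht1]; rfl
        rw [e1, hsp, ht3]
        simp only [Pi.smul_apply, smul_eq_mul]
        rw [ht2]
        rfl
      by_cases hν1 : ν = 1
      · -- v0 vanishes a.e., hence g = 0 a.e.
        have hv0 : (fun t : ℝ => (g (a - t) : ℂ)) =ᵐ[(volume : Measure ℝ)] fun _ => (0:ℂ) := by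
          filter_upwards [hae0] with t ht
          rw [hν1, one_mul] at ht
          have hv2 : (2:ℂ) * v0 g μc a b t = 0 := by linear_combination ht
          have hv : v0 g μc a b t = 0 :=
            (mul_eq_zero.mp hv2).resolve_left two_ne_zero
          rw [v0] at hv
          rcases mul_eq_zero.mp hv with h' | h'
          · rcases mul_eq_zero.mp h' with h'' | h''
            · exact absurd h'' hμne
            · exact absurd h'' (Complex.exp_ne_zero _)
          · exact h'
        have hcomp := (measurePreserving_refl_aux a).quasiMeasurePreserving.ae_eq_comp hv0
        refine hGne ?_
        filter_upwards [hcomp] with τ hτ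
        simpa [Function.comp, sub_sub_cancel] using hτ
      · by_cases hν2 : ν = -1
        · have hu0 : (fun t : ℝ => (g (-t) : ℂ)) =ᵐ[(volume : Measure ℝ)] fun _ => (0:ℂ) := by
            filter_upwards [hae0] with t ht
            rw [hν2] at ht
            have hu : (2:ℂ) * u0 g t = 0 := by linear_combination ht
            exact (mul_eq_zero.mp hu).resolve_left two_ne_zero
          have hcomp := (Measure.measurePreserving_neg
            (volume : Measure ℝ)).quasiMeasurePreserving.ae_eq_comp hu0
          refine hGne ?_
          filter_upwards [hcomp] with τ hτ
          simpa [Function.comp] using hτ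
        · -- genuine case : u0 = c0 • v0 a.e.
          set c0 : ℂ := -(1 + ν) / (1 - ν) with hc0def
          have h1ν : (1 : ℂ) - ν ≠ 0 := by
            intro hcon
            exact hν1 (by linear_combination -hcon)
          have h2ν : (1 : ℂ) + ν ≠ 0 := by
            intro hcon
            exact hν2 (by linear_combination hcon)
          have hc0ne : c0 ≠ 0 := by
            rw [hc0def]
            exact div_ne_zero (neg_ne_zero.mpr h2ν) h1ν
          have hu_ae : (fun t : ℝ => (g (-t) : ℂ)) =ᵐ[(volume : Measure ℝ)]
              fun t : ℝ => c0 * μc * Complex.exp (2 * Real.pi * Complex.I * b * t)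
                * g (a - t) := by
            filter_upwards [hae0] with t ht
            show u0 g t = c0 * μc * Complex.exp (2 * Real.pi * Complex.I * b * t) * g (a - t)
            have hveq : c0 * μc * Complex.exp (2 * Real.pi * Complex.I * b * t) * g (a - t)
                = c0 * v0 g μc a b t := by
              rw [v0]; ring
            rw [hveq, hc0def]
            rw [div_mul_eq_mul_div, eq_div_iff h1ν]
            linear_combination ht
          have hmain := (Measure.measurePreserving_neg
            (volume : Measure ℝ)).quasiMeasurePreserving.ae_eq_comp hu_ae
          have hmain' : ∀ᵐ τ ∂(volume : Measure ℝ),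
              (g τ : ℂ) = c0 * μc * Complex.exp (2 * Real.pi * Complex.I * b * (-τ : ℝ))
                * g (a + τ) := by
            filter_upwards [hmain] with τ hτ
            have : (g (- -τ) : ℂ) = c0 * μc
                * Complex.exp (2 * Real.pi * Complex.I * b * (-τ : ℝ)) * g (a - -τ) := hτ
            rw [neg_neg, sub_neg_eq_add] at this
            exact this
          by_cases ha0 : a = 0
          · have hb : b ≠ 0 := by
              rcases hab with h' | h'
              · exact absurd ha0 h'
              · exact h'
            have hβ : (-(2 * Real.pi * b) : ℝ) ≠ 0 := by
              intro hcon
              rw [neg_eq_zero] at hcon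
              rcases mul_eq_zero.mp hcon with h' | h'
              · have : (0:ℝ) < 2 * Real.pi := by positivity
                linarith
              · exact hb h'
            refine discrete_phase_zero (G := (⇑g : ℝ → ℂ)) (d := c0 * μc) hβ ?_ hGne
            filter_upwards [hmain'] with t ht
            rw [ha0, zero_add] at ht
            have he : Complex.exp (2 * Real.pi * Complex.I * b * (-t : ℝ))
                = Complex.exp (((-(2 * Real.pi * b) * t : ℝ)) * Complex.I) := by
              congr 1; push_cast; ring
            rw [he] at ht
            exact ht
          · -- periodic case
            set C : ℝ≥0∞ := ((‖c0 * μc‖₊ : ℝ≥0) : ℝ≥0∞) ^ (2:ℝ) with hCdef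
            have hCtop : C ≠ ⊤ :=
              ENNReal.rpow_ne_top_of_nonneg (by norm_num) ENNReal.coe_ne_top
            have hnorm : (fun t => (‖(g t : ℂ)‖₊ : ℝ≥0∞) ^ (2 : ℝ))
                =ᵐ[(volume : Measure ℝ)]
                fun t => C * (‖(g (t + a) : ℂ)‖₊ : ℝ≥0∞) ^ (2 : ℝ) := by
              filter_upwards [hmain'] with t ht
              have hre : ‖(g t : ℂ)‖ = ‖c0 * μc‖ * ‖(g (t + a) : ℂ)‖ := by
                rw [add_comm t a] at *
                rw [ht, norm_mul, norm_mul]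
                have : ‖Complex.exp (2 * Real.pi * Complex.I * b * (-t : ℝ))‖ = 1 := by
                  have harg : (2 * Real.pi * Complex.I * (b:ℝ) * ((-t : ℝ) : ℂ) : ℂ)
                      = ((2 * Real.pi * b * (-t) : ℝ) : ℂ) * Complex.I := by push_cast; ring
                  rw [harg, Complex.norm_exp_ofReal_mul_I]
                rw [this, mul_one]
              have hnn : ‖(g t : ℂ)‖₊ = ‖c0 * μc‖₊ * ‖(g (t + a) : ℂ)‖₊ := by
                apply NNReal.coe_injective
                push_cast
                exact hre
              rw [hnn]
              push_cast
              rw [ENNReal.mul_rpow_of_nonneg _ _ (by norm_num : (0:ℝ) ≤ 2)]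
            exact hGne (periodic_L2_zero (Lp.memLp g) ha0 hCtop hnorm)
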